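/- Let G₁ be obtained from a finite hypergraph G = (V, E) by adding a k-dominating set S = {v₁, …, v_k} with k ≥ 2. For each i = 2, …, k, the function y_i on V ∪ S defined by y_i(v₁) = 1, y_i(v_i) = −1 and y_i = 0 elsewhere is an eigenvector of L_{G₁} with eigenvalue (k+1)|V|/k. In particular (k+1)|V|/k is an eigenvalue of L_{G₁} with multiplicity at least k − 1. -/

import Mathlib

open Finset

/-- The hypergraph Laplacian as an operator on real-valued vertex functions:
`(L_G f)(v) = ∑_{e ∋ v} (1/(|e|-1)) ∑_{u ∈ e} (f v - f u)`. -/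
noncomputable def lapOp {V : Type} [Fintype V] [DecidableEq V] (E : Finset (Finset V)) (f : V → ℝ) : V → ℝ :=
  fun v => ∑ e ∈ E.filter (fun e => v ∈ e), (1 / ((e.card : ℝ) - 1)) * ∑ u ∈ e, (f v - f u)

/-- The matrix of the hypergraph Laplacian. -/
noncomputable def lapMatrix {V : Type} [Fintype V] [DecidableEq V] (E : Finset (Finset V)) : Matrix V V ℝ :=
  Matrix.of fun v w => ∑ e ∈ E.filter (fun e => v ∈ e),
    (1 / ((e.card : ℝ) - 1)) * ((if w = v then (e.card : ℝ) else 0) - (if w ∈ e then 1 else 0))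

/-- Edge set obtained from `E` by adding a `k`-dominating set `S = Fin k` of fresh vertices:
the new edges are `S ∪ {u}` for every old vertex `u`. -/
def domEdges {V : Type} [Fintype V] [DecidableEq V] (E : Finset (Finset V)) (k : ℕ) :
    Finset (Finset (V ⊕ Fin k)) :=
  E.image (Finset.image Sum.inl) ∪
    (Finset.univ : Finset V).image
      (fun u => insert (Sum.inl u) ((Finset.univ : Finset (Fin k)).image Sum.inr))

/-- The function taking value `1` at the first dominating vertex, `-1` at the `i`-th one and
`0` elsewhere. -/
noncomputable def yFun {V : Type} (k : ℕ) (i : Fin k) : V ⊕ Fin k → ℝ :=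
  Sum.elim (fun _ => 0) (fun j => if j.val = 0 then 1 else if j = i then -1 else 0)

section Aux

variable {V : Type} [Fintype V] [DecidableEq V]

lemma yFun_inl (k : ℕ) (i : Fin k) (w : V) : yFun (V := V) k i (Sum.inl w) = 0 := rfl

lemma sum_yFun_fin (k : ℕ) (i : Fin k) (hi : i.val ≠ 0) :
    ∑ j : Fin k, yFun (V := V) k i (Sum.inr j) = 0 := by
  have hk : 0 < k := i.pos
  have key : ∀ j : Fin k, yFun (V := V) k i (Sum.inr j)
      = (if j = (⟨0, hk⟩ : Fin k) then (1:ℝ) else 0) + (if j = i then (-1:ℝ) else 0) := by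
    intro j
    simp only [yFun, Sum.elim_inr, Fin.ext_iff]
    split_ifs <;> simp_all <;> omega
  rw [Finset.sum_congr rfl (fun j _ => key j), Finset.sum_add_distrib]
  rw [Finset.sum_ite_eq' univ, Finset.sum_ite_eq' univ]
  simp

lemma card_eNew (k : ℕ) (u : V) :
    (insert (Sum.inl u) (Finset.image Sum.inr Finset.univ : Finset (V ⊕ Fin k))).card = k + 1 := by
  rw [Finset.card_insert_of_notMem (by simp),
    Finset.card_image_of_injective _ Sum.inr_injective, Finset.card_univ, Fintype.card_fin]

lemma sum_yFun_eNew (k : ℕ) (i : Fin k) (hi : i.val ≠ 0) (u : V) :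
    ∑ x ∈ insert (Sum.inl u) (Finset.image Sum.inr Finset.univ : Finset (V ⊕ Fin k)),
      yFun (V := V) k i x = 0 := by
  rw [Finset.sum_insert (by simp),
    Finset.sum_image (fun a _ b _ h => Sum.inr_injective h)]
  simp [yFun_inl, sum_yFun_fin k i hi]

lemma sum_sub_eNew (k : ℕ) (i : Fin k) (hi : i.val ≠ 0) (u : V) (v : V ⊕ Fin k) :
    ∑ x ∈ insert (Sum.inl u) (Finset.image Sum.inr Finset.univ : Finset (V ⊕ Fin k)),
      (yFun (V := V) k i v - yFun (V := V) k i x)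
      = ((k : ℝ) + 1) * yFun (V := V) k i v := by
  rw [Finset.sum_sub_distrib, sum_yFun_eNew k i hi u, Finset.sum_const, card_eNew]
  push_cast
  ring

end Aux

/-- Each `y_i` (`i = 2, …, k`) is an eigenvector of `L_{G₁}` with eigenvalue `(k+1)|V|/k`;
these `k - 1` eigenvectors are linearly independent, so this eigenvalue has multiplicity
at least `k - 1`. -/
theorem stmt_2 {V : Type} [Fintype V] [DecidableEq V]
    (E : Finset (Finset V)) (hE : ∀ e ∈ E, 2 ≤ e.card) (k : ℕ) (hk : 2 ≤ k) :
    (∀ i : Fin k, i.val ≠ 0 →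
        yFun (V := V) k i ≠ 0 ∧
        lapOp (domEdges E k) (yFun k i) =
          (((k : ℝ) + 1) * (Fintype.card V) / k) • yFun (V := V) k i) ∧
      LinearIndependent ℝ (fun i : {i : Fin k // i.val ≠ 0} => yFun (V := V) k i.val) := by
  have hk0 : (0 : ℕ) < k := by omega
  have hkR : (k : ℝ) ≠ 0 := by positivity
  constructor
  · intro i hi
    constructor
    · intro h
      have h0 := congrFun h (Sum.inr (⟨0, hk0⟩ : Fin k))
      simp [yFun] at h0
    · funext v
      rcases v with w | j
      · -- old vertex: both sides vanish
        have : lapOp (domEdges E k) (yFun (V := V) k i) (Sum.inl w) = 0 := by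
          apply Finset.sum_eq_zero
          intro e he
          rw [Finset.mem_filter] at he
          obtain ⟨hmem, hin⟩ := he
          rw [domEdges, Finset.mem_union] at hmem
          rcases hmem with h1 | h2
          · obtain ⟨e₀, _, rfl⟩ := Finset.mem_image.mp h1
            have : ∑ u ∈ Finset.image Sum.inl e₀,
                (yFun (V := V) k i (Sum.inl w) - yFun (V := V) k i u) = 0 := by
              apply Finset.sum_eq_zero
              intro x hx
              obtain ⟨a, _, rfl⟩ := Finset.mem_image.mp hx
              simp [yFun_inl]
            rw [this, mul_zero]
          · obtain ⟨u, _, rfl⟩ := Finset.mem_image.mp h2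
            rw [sum_sub_eNew k i hi u, yFun_inl, mul_zero, mul_zero]
        rw [this]
        simp [yFun_inl]
      · -- dominating vertex
        have hfilter : (domEdges E k).filter (fun e => Sum.inr j ∈ e)
            = (Finset.univ : Finset V).image
                (fun u => insert (Sum.inl u) (Finset.image Sum.inr Finset.univ : Finset (V ⊕ Fin k))) := by
          ext e
          simp only [domEdges, Finset.mem_filter, Finset.mem_union, Finset.mem_image]
          constructor
          · rintro ⟨h1 | h2, hj⟩
            · obtain ⟨e₀, _, rfl⟩ := h1
              simp at hj
            · exact h2
          · rintro ⟨u, hu, rfl⟩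
            exact ⟨Or.inr ⟨u, hu, rfl⟩, by simp⟩
        have hinj : ∀ a ∈ (Finset.univ : Finset V), ∀ b ∈ (Finset.univ : Finset V),
            insert (Sum.inl a) (Finset.image Sum.inr Finset.univ : Finset (V ⊕ Fin k))
              = insert (Sum.inl b) (Finset.image Sum.inr Finset.univ : Finset (V ⊕ Fin k)) → a = b := by
          intro a _ b _ h
          have : Sum.inl a ∈ insert (Sum.inl b) (Finset.image Sum.inr Finset.univ : Finset (V ⊕ Fin k)) :=
            h ▸ Finset.mem_insert_self _ _
          simpa using this
        rw [Pi.smul_apply, smul_eq_mul]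
        show ∑ e ∈ (domEdges E k).filter (fun e => Sum.inr j ∈ e), _ = _
        rw [hfilter, Finset.sum_image hinj]
        have hterm : ∀ u : V,
            (1 / (((insert (Sum.inl u) (Finset.image Sum.inr Finset.univ : Finset (V ⊕ Fin k))).card : ℝ) - 1))
              * ∑ x ∈ insert (Sum.inl u) (Finset.image Sum.inr Finset.univ : Finset (V ⊕ Fin k)),
                  (yFun (V := V) k i (Sum.inr j) - yFun (V := V) k i x)
            = ((k : ℝ) + 1) / k * yFun (V := V) k i (Sum.inr j) := by
          intro u
          rw [sum_sub_eNew k i hi u, card_eNew]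
          push_cast
          field_simp
          rw [add_sub_cancel_right, mul_div_cancel_left₀ _ hkR]
        rw [Finset.sum_congr rfl (fun u _ => hterm u), Finset.sum_const, Finset.card_univ,
          nsmul_eq_mul]
        ring
  · rw [Fintype.linearIndependent_iff]
    intro g hg i
    have h := congrFun hg (Sum.inr i.val)
    rw [Finset.sum_apply] at h
    have key : ∀ i' : {i : Fin k // i.val ≠ 0},
        (g i' • yFun (V := V) k i'.val) (Sum.inr i.val)
          = if i' = i then -g i' else 0 := by
      intro i'
      simp only [Pi.smul_apply, yFun, Sum.elim_inr, smul_eq_mul]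
      rw [if_neg i.prop]
      by_cases h' : i' = i
      · subst h'; simp
      · rw [if_neg (fun he => h' (Subtype.ext he).symm), if_neg h', mul_zero]
    rw [Finset.sum_congr rfl (fun i' _ => key i'), Finset.sum_ite_eq' univ] at h
    simp at h
    exact h
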